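/- Let f : ℝ^d → ℝ be convex and continuously differentiable with f(0) = 0 = min f. Let X : [0,∞) → ℝ^d be continuous, twice continuously differentiable on (0,∞), with X(0) = X₀ and Ẋ(t) → 0 as t → 0⁺, satisfying Ẍ(t) + (3/t)·Ẋ(t) + ∇f(X(t)) = 0 for all t > 0. If X is bounded on [0,∞) (in particular if X(t) → 0 as t → ∞), then there exists a constant C_v > 0 such that t·‖Ẋ(t)‖ ≤ C_v for all t > 0. -/

import Mathlib

open RealInnerProductSpace

lemma grad_convex_ineq {d : ℕ} (f : EuclideanSpace ℝ (Fin d) → ℝ)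
    (hconv : ConvexOn ℝ Set.univ f) (hf : ContDiff ℝ 1 f) (hf0 : f 0 = 0)
    (x : EuclideanSpace ℝ (Fin d)) :
    f x ≤ ⟪gradient f x, x⟫ := by
  set L : ℝ →ᵃ[ℝ] EuclideanSpace ℝ (Fin d) :=
    AffineMap.lineMap x (0 : EuclideanSpace ℝ (Fin d)) with hL
  set φ : ℝ → ℝ := fun s => f (L s) with hφ
  have hφconv : ConvexOn ℝ Set.univ φ := by
    have := hconv.comp_affineMap L
    simp only [Set.preimage_univ] at this
    exact this
  have hL0 : L 0 = x := by simp [hL, AffineMap.lineMap_apply]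
  have hL1 : L 1 = 0 := by simp [hL, AffineMap.lineMap_apply]
  have hline : HasDerivAt (fun s : ℝ => L s) (0 - x) 0 := by
    simp only [hL, AffineMap.lineMap_apply]
    have : HasDerivAt (fun s : ℝ => s • ((0 : EuclideanSpace ℝ (Fin d)) - x) + x) (0 - x) 0 := by
      simpa using ((hasDerivAt_id (0:ℝ)).smul_const ((0 : EuclideanSpace ℝ (Fin d)) - x)).add_const x
    simpa [vsub_eq_sub, vadd_eq_add, add_comm] using this
  have hgrad : HasGradientAt f (gradient f x) x :=
    ((hf.differentiable one_ne_zero) x).hasGradientAt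
  have hφd : HasDerivAt φ ⟪gradient f x, 0 - x⟫ 0 := by
    have hgrad' := hgrad.hasFDerivAt
    rw [← hL0] at hgrad'
    have h := hgrad'.comp_hasDerivAt 0 hline
    simp [φ, Function.comp, hL0] at h ⊢
    exact h
  have hslope := hφconv.le_slope_of_hasDerivAt (Set.mem_univ (0:ℝ)) (Set.mem_univ 1)
    one_pos hφd
  have hs : slope φ 0 1 = -f x := by
    rw [slope_def_field]
    simp [φ, hL1, hL0, hf0]
  rw [hs] at hslope
  have h2 : ⟪gradient f x, (0:EuclideanSpace ℝ (Fin d)) - x⟫ = -⟪gradient f x, x⟫ := by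
    rw [inner_sub_right, inner_zero_right]; ring
  rw [h2] at hslope
  linarith

/-- along a bounded solution of the critical Nesterov flow for a convex
`C¹` potential `f` with `f(0) = 0 = min f`, there is `C_v > 0` with
`t·‖Ẋ(t)‖ ≤ C_v` for all `t > 0`. -/
theorem nesterov_velocity_bound (d : ℕ)
    (f : EuclideanSpace ℝ (Fin d) → ℝ)
    (hconv : ConvexOn ℝ Set.univ f) (hf : ContDiff ℝ 1 f)
    (hf0 : f 0 = 0) (hmin : ∀ x, 0 ≤ f x)
    (X₀ : EuclideanSpace ℝ (Fin d)) (X X' X'' : ℝ → EuclideanSpace ℝ (Fin d))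
    (hXcont : ContinuousOn X (Set.Ici 0))
    (hX' : ∀ t > (0:ℝ), HasDerivAt X (X' t) t)
    (hX'' : ∀ t > (0:ℝ), HasDerivAt X' (X'' t) t)
    (hX''cont : ContinuousOn X'' (Set.Ioi 0))
    (hX0 : X 0 = X₀)
    (hX'0 : Filter.Tendsto X' (nhdsWithin 0 (Set.Ioi 0)) (nhds 0))
    (hODE : ∀ t > (0:ℝ), X'' t + (3 / t) • X' t + gradient f (X t) = 0)
    (hbdd : ∃ B : ℝ, ∀ t ≥ (0:ℝ), ‖X t‖ ≤ B) :
    ∃ Cv > (0:ℝ), ∀ t > (0:ℝ), t * ‖X' t‖ ≤ Cv := by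
  obtain ⟨B, hB⟩ := hbdd
  set v : ℝ → EuclideanSpace ℝ (Fin d) := fun t => (2:ℝ) • X t + t • X' t with hv_def
  set En : ℝ → ℝ := fun t => t^2 * f (X t) + (1/2) * ⟪v t, v t⟫ with hEn_def
  -- derivative of the Lyapunov function
  have hEderiv : ∀ t > (0:ℝ),
      HasDerivAt En (2*t*(f (X t) - ⟪X t, gradient f (X t)⟫)) t := by
    intro t ht
    have hgrad : HasGradientAt f (gradient f (X t)) (X t) :=
      ((hf.differentiable one_ne_zero) (X t)).hasGradientAt
    have hfx : HasDerivAt (fun s => f (X s)) ⟪gradient f (X t), X' t⟫ t := by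
      have h := hgrad.hasFDerivAt.comp_hasDerivAt t (hX' t ht)
      simp [Function.comp] at h ⊢
      exact h
    have h1 : HasDerivAt (fun s => s^2 * f (X s))
        (2*t * f (X t) + t^2 * ⟪gradient f (X t), X' t⟫) t := by
      have : HasDerivAt (fun s => s^2 * f (X s)) _ t := (hasDerivAt_pow 2 t).mul hfx
      convert this using 1
      ring
    have hv' : HasDerivAt v ((2:ℝ) • X' t + (t • X'' t + X' t)) t := by
      have := ((hX' t ht).const_smul (2:ℝ)).add ((hasDerivAt_id t).smul (hX'' t ht))
      simp at this ⊢
      exact this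
    have hveq : (2:ℝ) • X' t + (t • X'' t + X' t) = -(t • gradient f (X t)) := by
      have h := hODE t ht
      have hx'' : X'' t = -((3/t) • X' t + gradient f (X t)) := by
        rw [add_assoc] at h
        exact eq_neg_of_add_eq_zero_left h
      have h3 : t • ((3/t) • X' t) = (3:ℝ) • X' t := by
        rw [smul_smul]
        congr 1
        field_simp
      rw [hx'', smul_neg, smul_add, h3]
      module
    rw [hveq] at hv'
    have h2 : HasDerivAt (fun s => ⟪v s, v s⟫)
        (⟪v t, -(t • gradient f (X t))⟫ + ⟪-(t • gradient f (X t)), v t⟫) t :=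
      HasDerivAt.inner ℝ hv' hv'
    have hsum : HasDerivAt En _ t := h1.add (h2.const_mul (1/2 : ℝ))
    convert hsum using 1
    simp only [hv_def, inner_add_left, inner_add_right, inner_neg_left, inner_neg_right,
      inner_smul_left, inner_smul_right, RCLike.ofReal_real_eq_id, id_eq, conj_trivial,
      real_inner_comm (X t) (gradient f (X t)), real_inner_comm (X' t) (gradient f (X t))]
    ring
  -- monotonicity
  have hmono : ∀ a b : ℝ, 0 < a → a ≤ b → En b ≤ En a := by
    intro a b ha hab
    have hsub : Set.Icc a b ⊆ Set.Ioi 0 := fun x hx => lt_of_lt_of_le ha hx.1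
    have hanti : AntitoneOn En (Set.Icc a b) := by
      apply antitoneOn_of_deriv_nonpos (convex_Icc a b)
      · exact fun x hx => ((hEderiv x (hsub hx)).continuousAt).continuousWithinAt
      · intro x hx
        rw [interior_Icc] at hx
        exact (hEderiv x (lt_trans ha hx.1)).differentiableAt.differentiableWithinAt
      · intro x hx
        rw [interior_Icc] at hx
        have hx0 : 0 < x := lt_trans ha hx.1
        rw [(hEderiv x hx0).deriv]
        have hineq : f (X x) ≤ ⟪X x, gradient f (X x)⟫ := by
          rw [real_inner_comm]
          exact grad_convex_ineq f hconv hf hf0 (X x)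
        have : (0:ℝ) ≤ 2 * x := by linarith
        exact mul_nonpos_of_nonneg_of_nonpos this (by linarith)
    exact hanti ⟨le_rfl, hab⟩ ⟨hab, le_rfl⟩ hab
  -- limit at 0⁺
  have hXlim : Filter.Tendsto X (nhdsWithin 0 (Set.Ioi 0)) (nhds X₀) := by
    have h : Filter.Tendsto X (nhdsWithin 0 (Set.Ici 0)) (nhds (X 0)) :=
      hXcont 0 Set.self_mem_Ici
    rw [hX0] at h
    exact h.mono_left (nhdsWithin_mono 0 Set.Ioi_subset_Ici_self)
  have hid : Filter.Tendsto (fun s : ℝ => s) (nhdsWithin 0 (Set.Ioi 0)) (nhds 0) :=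
    Filter.tendsto_id.mono_left nhdsWithin_le_nhds
  have hvlim : Filter.Tendsto v (nhdsWithin 0 (Set.Ioi 0)) (nhds ((2:ℝ) • X₀)) := by
    have h := (hXlim.const_smul (2:ℝ)).add (hid.smul hX'0)
    simpa using h
  have hElim : Filter.Tendsto En (nhdsWithin 0 (Set.Ioi 0)) (nhds (2 * ‖X₀‖^2)) := by
    have hfl : Filter.Tendsto (fun s => s^2 * f (X s)) (nhdsWithin 0 (Set.Ioi 0)) (nhds 0) := by
      have h := ((hid.mul hid).mul ((hf.continuous.tendsto X₀).comp hXlim))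
      have h2 : Filter.Tendsto (fun s : ℝ => s * s * f (X s)) (nhdsWithin 0 (Set.Ioi 0))
          (nhds 0) := by simpa using h
      convert h2 using 2 with s
      ring
    have hinner : Filter.Tendsto (fun s => ⟪v s, v s⟫) (nhdsWithin 0 (Set.Ioi 0))
        (nhds ⟪(2:ℝ) • X₀, (2:ℝ) • X₀⟫) := hvlim.inner hvlim
    have h := hfl.add (hinner.const_mul (1/2 : ℝ))
    have heq : (0:ℝ) + (1/2) * ⟪(2:ℝ) • X₀, (2:ℝ) • X₀⟫ = 2 * ‖X₀‖^2 := by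
      rw [real_inner_smul_left, real_inner_smul_right, real_inner_self_eq_norm_sq]
      ring
    rw [heq] at h
    exact h
  have hEbound : ∀ t > (0:ℝ), En t ≤ 2 * ‖X₀‖^2 := by
    intro t ht
    refine ge_of_tendsto hElim ?_
    filter_upwards [Ioo_mem_nhdsGT_of_mem (Set.mem_Ico.mpr ⟨le_rfl, ht⟩)] with s hs
    exact hmono s t hs.1 hs.2.le
  have hB0 : 0 ≤ B := le_trans (norm_nonneg (X 0)) (hB 0 le_rfl)
  refine ⟨2 * ‖X₀‖ + 2 * B + 1, by positivity, ?_⟩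
  intro t ht
  have hEn_ge : (1/2) * ‖v t‖^2 ≤ En t := by
    have h1 : 0 ≤ t^2 * f (X t) := mul_nonneg (sq_nonneg t) (hmin (X t))
    have h2 : ⟪v t, v t⟫ = ‖v t‖^2 := real_inner_self_eq_norm_sq (v t)
    simp only [hEn_def]
    rw [h2]
    linarith
  have hnv2 : ‖v t‖^2 ≤ 4 * ‖X₀‖^2 := by
    have h := hEbound t ht
    have h2 := hEn_ge.trans h
    clear_value v En
    clear hEn_ge h hEderiv hmono hElim hEbound hvlim hEn_def hv_def
    linarith
  have hnv : ‖v t‖ ≤ 2 * ‖X₀‖ := by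
    nlinarith [norm_nonneg (v t), norm_nonneg X₀]
  have ht' : t • X' t = v t - (2:ℝ) • X t := by
    simp [hv_def]
  have : t * ‖X' t‖ = ‖t • X' t‖ := by
    rw [norm_smul, Real.norm_eq_abs, abs_of_pos ht]
  rw [this, ht']
  calc ‖v t - (2:ℝ) • X t‖ ≤ ‖v t‖ + ‖(2:ℝ) • X t‖ := norm_sub_le _ _
    _ = ‖v t‖ + 2 * ‖X t‖ := by rw [norm_smul]; simp
    _ ≤ 2 * ‖X₀‖ + 2 * B := add_le_add hnv (by linarith [hB t ht.le])
    _ ≤ 2 * ‖X₀‖ + 2 * B + 1 := by linarith
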